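/- The blow-up of C_5 by K_m contains no induced H2, where H2 is the 5-cycle a-b-c-d-e-a with added chords ac and bd. -/

import Mathlib

open SimpleGraph

/-- The blow-up `C₅[K_m]`: each vertex of the 5-cycle replaced by a clique of size `m`. -/
def blowupC5 (m : ℕ) : SimpleGraph (Fin 5 × Fin m) where
  Adj x y := (x.1 = y.1 ∧ x.2 ≠ y.2) ∨ (cycleGraph 5).Adj x.1 y.1
  symm := by
    constructor
    intro x y h
    rcases h with ⟨h1, h2⟩ | h
    · exact Or.inl ⟨h1.symm, h2.symm⟩
    · exact Or.inr h.symm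
  loopless := by
    constructor
    intro x h
    rcases h with ⟨_, h2⟩ | h
    · exact h2 rfl
    · exact (cycleGraph 5).loopless.irrefl _ h

/-- `H2`: the 5-cycle a-b-c-d-e-a together with chords ac and bd. -/
def H2 : SimpleGraph (Fin 5) :=
  fromEdgeSet {s(0, 1), s(1, 2), s(2, 3), s(3, 4), s(4, 0), s(0, 2), s(1, 3)}

/-- Adjacency (distance ≤ 1) relation on `Fin 5` corresponding to `cycleGraph 5`. -/
abbrev cadj (x y : Fin 5) : Prop := x - y = 1 ∨ y - x = 1

lemma cadj_iff {x y : Fin 5} : (cycleGraph 5).Adj x y ↔ cadj x y := cycleGraph_adj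

lemma h2adj (a b : Fin 5) : H2.Adj a b ↔
    (s(a,b) = s(0,1) ∨ s(a,b) = s(1,2) ∨ s(a,b) = s(2,3) ∨ s(a,b) = s(3,4) ∨
     s(a,b) = s(4,0) ∨ s(a,b) = s(0,2) ∨ s(a,b) = s(1,3)) ∧ a ≠ b := by
  simp [H2, fromEdgeSet_adj, Set.mem_insert_iff]

lemma key : ∀ a b c d e : Fin 5,
    (a = b ∨ cadj a b) → (b = c ∨ cadj b c) → (c = d ∨ cadj c d) →
    (d = e ∨ cadj d e) → (e = a ∨ cadj e a) → (a = c ∨ cadj a c) →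
    (b = d ∨ cadj b d) →
    ¬ cadj a d → a ≠ d → ¬ cadj b e → b ≠ e → ¬ cadj c e → c ≠ e → False := by decide

theorem stmt_15 (m : ℕ) : ¬ Nonempty (H2 ↪g blowupC5 m) := by
  rintro ⟨f⟩
  -- edges give "same class or adjacent class"
  have he : ∀ i j : Fin 5, H2.Adj i j → (f i).1 = (f j).1 ∨ cadj (f i).1 (f j).1 := by
    intro i j h
    exact (f.map_rel_iff.mpr h).imp And.left cadj_iff.mp
  -- non-edges give "distinct, non-adjacent classes"
  have hn : ∀ i j : Fin 5, i ≠ j → ¬ H2.Adj i j →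
      ¬ cadj (f i).1 (f j).1 ∧ (f i).1 ≠ (f j).1 := by
    intro i j hij h
    have hb : ¬ (blowupC5 m).Adj (f i) (f j) := fun hadj => h (f.map_rel_iff.mp hadj)
    constructor
    · exact fun hc => hb (Or.inr (cadj_iff.mpr hc))
    · intro heq
      have h2 : (f i).2 = (f j).2 := by
        by_contra hne
        exact hb (Or.inl ⟨heq, hne⟩)
      exact hij (f.injective (Prod.ext heq h2))
  have e01 : H2.Adj 0 1 := by rw [h2adj]; exact ⟨Or.inl rfl, by decide⟩
  have e12 : H2.Adj 1 2 := by rw [h2adj]; exact ⟨Or.inr (Or.inl rfl), by decide⟩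
  have e23 : H2.Adj 2 3 := by rw [h2adj]; exact ⟨Or.inr (Or.inr (Or.inl rfl)), by decide⟩
  have e34 : H2.Adj 3 4 := by rw [h2adj]; exact ⟨Or.inr (Or.inr (Or.inr (Or.inl rfl))), by decide⟩
  have e40 : H2.Adj 4 0 := by
    rw [h2adj]; exact ⟨Or.inr (Or.inr (Or.inr (Or.inr (Or.inl rfl)))), by decide⟩
  have e02 : H2.Adj 0 2 := by
    rw [h2adj]; exact ⟨Or.inr (Or.inr (Or.inr (Or.inr (Or.inr (Or.inl rfl))))), by decide⟩
  have e13 : H2.Adj 1 3 := by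
    rw [h2adj]; exact ⟨Or.inr (Or.inr (Or.inr (Or.inr (Or.inr (Or.inr rfl))))), by decide⟩
  have n03 : ¬ H2.Adj 0 3 := by rw [h2adj]; decide
  have n14 : ¬ H2.Adj 1 4 := by rw [h2adj]; decide
  have n24 : ¬ H2.Adj 2 4 := by rw [h2adj]; decide
  obtain ⟨h03, h03'⟩ := hn 0 3 (by decide) n03
  obtain ⟨h14, h14'⟩ := hn 1 4 (by decide) n14
  obtain ⟨h24, h24'⟩ := hn 2 4 (by decide) n24
  exact key (f 0).1 (f 1).1 (f 2).1 (f 3).1 (f 4).1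
    (he 0 1 e01) (he 1 2 e12) (he 2 3 e23) (he 3 4 e34) (he 4 0 e40)
    (he 0 2 e02) (he 1 3 e13) h03 h03' h14 h14' h24 h24'
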